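/- arXiv:1207.0586 — 4 statements merged into one kernel-verified Lean document; each statement's English description precedes it below -/
import Mathlib

section
/- The function J₀ is twice differentiable on ℝ and satisfies the Bessel differential equation of order zero: for every x ∈ ℝ, x·J₀''(x) + J₀'(x) + x·J₀(x) = 0. -/
open Real

/-- Bessel function of the first kind of order zero. -/
noncomputable def J0 (x : ℝ) : ℝ := (1 / π) * ∫ t in (0:ℝ)..π, Real.cos (x * Real.sin t)

lemma abs_sin_le_one' (y : ℝ) : |Real.sin y| ≤ 1 :=
  abs_le.mpr ⟨Real.neg_one_le_sin y, Real.sin_le_one y⟩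

lemma hasDerivAt_int1 (x : ℝ) :
    HasDerivAt (fun y => ∫ t in (0:ℝ)..π, Real.cos (y * Real.sin t))
      (∫ t in (0:ℝ)..π, -(Real.sin t * Real.sin (x * Real.sin t))) x := by
  have := (intervalIntegral.hasDerivAt_integral_of_dominated_loc_of_deriv_le
    (F := fun y t => Real.cos (y * Real.sin t))
    (F' := fun y t => -(Real.sin t * Real.sin (y * Real.sin t)))
    (bound := fun _ => 1) (μ := MeasureTheory.volume) (a := (0:ℝ)) (b := π) (x₀ := x)
    (s := Metric.ball x 1) (Metric.ball_mem_nhds x one_pos) ?_ ?_ ?_ ?_ ?_ ?_).2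
  · exact this
  · filter_upwards with y
    exact (Continuous.aestronglyMeasurable (by fun_prop))
  · exact (Continuous.intervalIntegrable (by fun_prop) _ _)
  · exact (Continuous.aestronglyMeasurable (by fun_prop))
  · filter_upwards with t
    intro _ y _
    have : |Real.sin t * Real.sin (y * Real.sin t)| ≤ 1 := by
      rw [abs_mul]
      exact mul_le_one₀ (abs_sin_le_one' t) (abs_nonneg _) (abs_sin_le_one' _)
    simpa [abs_mul] using this
  · exact (Continuous.intervalIntegrable continuous_const _ _)
  · filter_upwards with t
    intro _ y _
    have h : HasDerivAt (fun y => Real.cos (y * Real.sin t)) _ y :=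
      ((hasDerivAt_mul_const (Real.sin t)).cos (x := y))
    exact h.congr_deriv (by ring)

lemma hasDerivAt_int2 (x : ℝ) :
    HasDerivAt (fun y => ∫ t in (0:ℝ)..π, -(Real.sin t * Real.sin (y * Real.sin t)))
      (∫ t in (0:ℝ)..π, -(Real.sin t ^ 2 * Real.cos (x * Real.sin t))) x := by
  have := (intervalIntegral.hasDerivAt_integral_of_dominated_loc_of_deriv_le
    (F := fun y t => -(Real.sin t * Real.sin (y * Real.sin t)))
    (F' := fun y t => -(Real.sin t ^ 2 * Real.cos (y * Real.sin t)))
    (bound := fun _ => 1) (μ := MeasureTheory.volume) (a := (0:ℝ)) (b := π) (x₀ := x)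
    (s := Metric.ball x 1) (Metric.ball_mem_nhds x one_pos) ?_ ?_ ?_ ?_ ?_ ?_).2
  · exact this
  · filter_upwards with y
    exact (Continuous.aestronglyMeasurable (by fun_prop))
  · exact (Continuous.intervalIntegrable (by fun_prop) _ _)
  · exact (Continuous.aestronglyMeasurable (by fun_prop))
  · filter_upwards with t
    intro _ y _
    have h1 : |Real.sin t ^ 2| ≤ 1 := by
      rw [abs_pow]
      exact pow_le_one₀ (abs_nonneg _) (abs_sin_le_one' t)
    have h2 : |Real.cos (y * Real.sin t)| ≤ 1 :=
      abs_le.mpr ⟨Real.neg_one_le_cos _, Real.cos_le_one _⟩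
    have : |Real.sin t ^ 2 * Real.cos (y * Real.sin t)| ≤ 1 := by
      rw [abs_mul]
      exact mul_le_one₀ h1 (abs_nonneg _) h2
    simpa [abs_mul] using this
  · exact (Continuous.intervalIntegrable continuous_const _ _)
  · filter_upwards with t
    intro _ y _
    have h : HasDerivAt (fun y => -(Real.sin t * Real.sin (y * Real.sin t))) _ y :=
      (((hasDerivAt_mul_const (Real.sin t)).sin (x := y)).const_mul (Real.sin t)).neg
    exact h.congr_deriv (by ring)

lemma J0_hasDerivAt (x : ℝ) :
    HasDerivAt J0 ((1 / π) * ∫ t in (0:ℝ)..π, -(Real.sin t * Real.sin (x * Real.sin t))) x :=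
  (hasDerivAt_int1 x).const_mul (1 / π)

lemma deriv_J0 : deriv J0 = fun x =>
    (1 / π) * ∫ t in (0:ℝ)..π, -(Real.sin t * Real.sin (x * Real.sin t)) :=
  funext fun x => (J0_hasDerivAt x).deriv

lemma derivJ0_hasDerivAt (x : ℝ) :
    HasDerivAt (deriv J0)
      ((1 / π) * ∫ t in (0:ℝ)..π, -(Real.sin t ^ 2 * Real.cos (x * Real.sin t))) x := by
  rw [deriv_J0]
  exact (hasDerivAt_int2 x).const_mul (1 / π)

lemma key_integral (x : ℝ) :
    (∫ t in (0:ℝ)..π, (x * -(Real.sin t ^ 2 * Real.cos (x * Real.sin t))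
      + -(Real.sin t * Real.sin (x * Real.sin t)) + x * Real.cos (x * Real.sin t))) = 0 := by
  have h : ∀ t ∈ Set.uIcc (0:ℝ) π,
      HasDerivAt (fun t => Real.cos t * Real.sin (x * Real.sin t))
        (x * -(Real.sin t ^ 2 * Real.cos (x * Real.sin t))
          + -(Real.sin t * Real.sin (x * Real.sin t)) + x * Real.cos (x * Real.sin t)) t := by
    intro t _
    have h1 : HasDerivAt (fun t => Real.sin (x * Real.sin t))
        (Real.cos (x * Real.sin t) * (x * Real.cos t)) t :=
      ((Real.hasDerivAt_sin t).const_mul x).sin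
    have h2 : HasDerivAt (fun t => Real.cos t * Real.sin (x * Real.sin t)) _ t :=
      (Real.hasDerivAt_cos t).mul h1
    convert h2 using 1
    have ht := Real.sin_sq_add_cos_sq t
    linear_combination (-(x * Real.cos (x * Real.sin t))) * ht
  rw [intervalIntegral.integral_eq_sub_of_hasDerivAt h
    (Continuous.intervalIntegrable (by fun_prop) _ _)]
  simp

/-- `J₀` is twice differentiable on `ℝ` and satisfies the Bessel
differential equation of order zero: `x·J₀''(x) + J₀'(x) + x·J₀(x) = 0` for all `x`. -/
theorem stmt_3 :
    Differentiable ℝ J0 ∧ Differentiable ℝ (deriv J0) ∧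
    ∀ x : ℝ, x * deriv (deriv J0) x + deriv J0 x + x * J0 x = 0 := by
  refine ⟨fun x => (J0_hasDerivAt x).differentiableAt,
    fun x => (derivJ0_hasDerivAt x).differentiableAt, fun x => ?_⟩
  have hd2 : deriv (deriv J0) x
      = (1 / π) * ∫ t in (0:ℝ)..π, -(Real.sin t ^ 2 * Real.cos (x * Real.sin t)) :=
    (derivJ0_hasDerivAt x).deriv
  have hd1 : deriv J0 x
      = (1 / π) * ∫ t in (0:ℝ)..π, -(Real.sin t * Real.sin (x * Real.sin t)) :=
    (J0_hasDerivAt x).deriv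
  rw [hd2, hd1, J0]
  have hsplit :
      (∫ t in (0:ℝ)..π, (x * -(Real.sin t ^ 2 * Real.cos (x * Real.sin t))
        + -(Real.sin t * Real.sin (x * Real.sin t)) + x * Real.cos (x * Real.sin t)))
      = x * (∫ t in (0:ℝ)..π, -(Real.sin t ^ 2 * Real.cos (x * Real.sin t)))
        + (∫ t in (0:ℝ)..π, -(Real.sin t * Real.sin (x * Real.sin t)))
        + x * (∫ t in (0:ℝ)..π, Real.cos (x * Real.sin t)) := by
    rw [intervalIntegral.integral_add, intervalIntegral.integral_add,
      intervalIntegral.integral_const_mul, intervalIntegral.integral_const_mul]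
    · exact Continuous.intervalIntegrable (by fun_prop) _ _
    · exact Continuous.intervalIntegrable (by fun_prop) _ _
    · exact Continuous.intervalIntegrable (by fun_prop) _ _
    · exact Continuous.intervalIntegrable (by fun_prop) _ _
  have h0 := key_integral x
  rw [hsplit] at h0
  linear_combination (1 / π) * h0
end

section
/- The function J₁ is differentiable on ℝ and satisfies x·J₁'(x) = x·J₀(x) − J₁(x) for every x ∈ ℝ; in particular J₁'(x) = J₀(x) − J₁(x)/x for x ≠ 0. -/
open Real
open intervalIntegral MeasureTheory

/-- Bessel function of the first kind of order one. -/
noncomputable def J1 (x : ℝ) : ℝ := (1 / π) * ∫ t in (0:ℝ)..π, Real.cos (t - x * Real.sin t)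

set_option maxHeartbeats 1000000 in
lemma hderivA (x : ℝ) :
    HasDerivAt (fun x : ℝ => ∫ t in (0:ℝ)..π, Real.cos (t - x * Real.sin t))
      (∫ t in (0:ℝ)..π, Real.sin (t - x * Real.sin t) * Real.sin t) x := by
  have hbound : ∀ᵐ t : ℝ, t ∈ Set.uIoc (0:ℝ) π →
      ∀ y ∈ Metric.ball x 1, ‖Real.sin (t - y * Real.sin t) * Real.sin t‖ ≤ 1 := by
    filter_upwards with t _ y _
    rw [norm_mul, Real.norm_eq_abs, Real.norm_eq_abs]
    calc |Real.sin (t - y * Real.sin t)| * |Real.sin t| ≤ 1 * 1 :=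
      mul_le_mul (abs_sin_le_one _) (abs_sin_le_one _) (abs_nonneg _) zero_le_one
    _ = 1 := one_mul 1
  have hdiff : ∀ᵐ t : ℝ, t ∈ Set.uIoc (0:ℝ) π →
      ∀ y ∈ Metric.ball x 1,
      HasDerivAt (fun y : ℝ => Real.cos (t - y * Real.sin t))
        (Real.sin (t - y * Real.sin t) * Real.sin t) y := by
    filter_upwards with t _ y _
    have h1 : HasDerivAt (fun y : ℝ => t - y * Real.sin t) (-(Real.sin t)) y := by
      simpa using ((hasDerivAt_id y).mul_const (Real.sin t)).const_sub t
    have := (Real.hasDerivAt_cos (t - y * Real.sin t)).comp y h1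
    simpa [mul_comm, Function.comp_def] using this
  have := intervalIntegral.hasDerivAt_integral_of_dominated_loc_of_deriv_le
    (μ := volume)
    (F := fun x t => Real.cos (t - x * Real.sin t))
    (F' := fun x t => Real.sin (t - x * Real.sin t) * Real.sin t)
    (a := 0) (b := π) (x₀ := x) (bound := fun _ => 1) (Metric.ball_mem_nhds x one_pos)
    (Filter.Eventually.of_forall fun y =>
      (Continuous.aestronglyMeasurable (by continuity)))
    (Continuous.intervalIntegrable (by continuity) _ _)
    (Continuous.aestronglyMeasurable (by continuity))
    hbound
    (Continuous.intervalIntegrable continuous_const _ _)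
    hdiff
  exact this.2


lemma ftcB (x : ℝ) :
    (∫ t in (0:ℝ)..π, (1 - x * Real.cos t) * Real.cos (t - x * Real.sin t)) = 0 := by
  have h : ∀ t ∈ Set.uIcc (0:ℝ) π,
      HasDerivAt (fun t : ℝ => Real.sin (t - x * Real.sin t))
        ((1 - x * Real.cos t) * Real.cos (t - x * Real.sin t)) t := by
    intro t _
    have h1 : HasDerivAt (fun t : ℝ => t - x * Real.sin t) (1 - x * Real.cos t) t := by
      simpa [Pi.sub_def] using (hasDerivAt_id t).sub ((Real.hasDerivAt_sin t).const_mul x)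
    have := (Real.hasDerivAt_sin (t - x * Real.sin t)).comp t h1
    simpa [mul_comm, Function.comp_def] using this
  have := intervalIntegral.integral_eq_sub_of_hasDerivAt h
    (Continuous.intervalIntegrable (by continuity) _ _)
  simpa [Real.sin_pi] using this

lemma key (x : ℝ) :
    x * (∫ t in (0:ℝ)..π, Real.sin (t - x * Real.sin t) * Real.sin t)
      = x * (∫ t in (0:ℝ)..π, Real.cos (x * Real.sin t))
        - ∫ t in (0:ℝ)..π, Real.cos (t - x * Real.sin t) := by
  have i1 : IntervalIntegrable (fun t => Real.sin (t - x * Real.sin t) * Real.sin t) volume 0 π :=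
    Continuous.intervalIntegrable (by continuity) _ _
  have i2 : IntervalIntegrable (fun t => Real.cos (x * Real.sin t)) volume 0 π :=
    Continuous.intervalIntegrable (by continuity) _ _
  have i3 : IntervalIntegrable (fun t => Real.cos (t - x * Real.sin t)) volume 0 π :=
    Continuous.intervalIntegrable (by continuity) _ _
  have hpt : ∀ t : ℝ, x * (Real.sin (t - x * Real.sin t) * Real.sin t)
      = x * Real.cos (x * Real.sin t) - Real.cos (t - x * Real.sin t)
        + (1 - x * Real.cos t) * Real.cos (t - x * Real.sin t) := by
    intro t
    have : Real.cos (x * Real.sin t) = Real.cos (t - (t - x * Real.sin t)) := by ring_nf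
    rw [this, Real.cos_sub]
    ring
  calc x * (∫ t in (0:ℝ)..π, Real.sin (t - x * Real.sin t) * Real.sin t)
      = ∫ t in (0:ℝ)..π, x * (Real.sin (t - x * Real.sin t) * Real.sin t) := by
        rw [← intervalIntegral.integral_const_mul]
    _ = ∫ t in (0:ℝ)..π, (x * Real.cos (x * Real.sin t) - Real.cos (t - x * Real.sin t)
          + (1 - x * Real.cos t) * Real.cos (t - x * Real.sin t)) := by
        exact intervalIntegral.integral_congr fun t _ => hpt t
    _ = x * (∫ t in (0:ℝ)..π, Real.cos (x * Real.sin t))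
          - (∫ t in (0:ℝ)..π, Real.cos (t - x * Real.sin t))
          + ∫ t in (0:ℝ)..π, (1 - x * Real.cos t) * Real.cos (t - x * Real.sin t) := by
        rw [intervalIntegral.integral_add ((i2.const_mul x).sub i3)
            (Continuous.intervalIntegrable (by continuity) _ _),
          intervalIntegral.integral_sub (i2.const_mul x) i3,
          intervalIntegral.integral_const_mul]
    _ = _ := by rw [ftcB x]; ring

lemma hJ1 (x : ℝ) :
    HasDerivAt J1 ((1/π) * ∫ t in (0:ℝ)..π, Real.sin (t - x * Real.sin t) * Real.sin t) x := by
  unfold J1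
  exact (hderivA x).const_mul (1/π)

/-- `J₁` is differentiable on `ℝ` and satisfies
`x·J₁'(x) = x·J₀(x) − J₁(x)` for every `x`; in particular
`J₁'(x) = J₀(x) − J₁(x)/x` for `x ≠ 0`. -/
theorem stmt_5 :
    Differentiable ℝ J1 ∧
    (∀ x : ℝ, x * deriv J1 x = x * J0 x - J1 x) ∧
    (∀ x : ℝ, x ≠ 0 → deriv J1 x = J0 x - J1 x / x) := by
  have hd : ∀ x, deriv J1 x = (1/π) * ∫ t in (0:ℝ)..π, Real.sin (t - x * Real.sin t) * Real.sin t :=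
    fun x => (hJ1 x).deriv
  have h2 : ∀ x : ℝ, x * deriv J1 x = x * J0 x - J1 x := by
    intro x
    rw [hd x, J0, J1]
    have := key x
    have hc : (∫ t in (0:ℝ)..π, Real.sin t * Real.sin (t - x * Real.sin t))
        = ∫ t in (0:ℝ)..π, Real.sin (t - x * Real.sin t) * Real.sin t :=
      intervalIntegral.integral_congr fun t _ => mul_comm _ _
    field_simp
    rw [hc]
    nlinarith [this, hc]
  refine ⟨fun x => (hJ1 x).differentiableAt, h2, fun x hx => ?_⟩
  have := h2 x
  field_simp at this ⊢
  nlinarith [this]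
end

section
/- Let a, b ∈ ℝ with 0 < b < a. Then the improper integral ∫₀^∞ cos(at) J₀(bt) dt converges and equals 0; that is, lim_{T→∞} ∫₀^T cos(at) J₀(bt) dt = 0. -/
set_option maxHeartbeats 1000000

open Real Filter Topology

section AuxLemmas
open MeasureTheory Set

lemma RL_aux (f : ℝ → ℝ) (hf : Integrable f) :
    Tendsto (fun w : ℝ => ∫ v : ℝ, f v * Real.cos (w * v)) atTop (𝓝 0) ∧
    Tendsto (fun w : ℝ => ∫ v : ℝ, f v * Real.sin (w * v)) atTop (𝓝 0) := by
  have hg : Integrable (fun v : ℝ => (f v : ℂ)) := hf.ofReal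
  have H := Real.tendsto_integral_exp_smul_cocompact (fun v : ℝ => (f v : ℂ))
  have hmap : Tendsto (fun w : ℝ => w / (2 * π)) atTop (cocompact ℝ) := by
    have h1 : Tendsto (fun w : ℝ => w / (2 * π)) atTop atTop :=
      tendsto_id.atTop_div_const (by positivity)
    exact h1.mono_right (by rw [cocompact_eq_atBot_atTop]; exact le_sup_right)
  have H2 : Tendsto (fun w : ℝ => ∫ v : ℝ, Real.fourierChar (-(v * (w / (2 * π)))) • (f v : ℂ))
      atTop (𝓝 0) := H.comp hmap
  have hcosI : ∀ w : ℝ, Integrable (fun v : ℝ => f v * Real.cos (w * v)) := by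
    intro w
    have h := hf.bdd_mul (f := fun v : ℝ => Real.cos (w * v))
      ((Real.continuous_cos.comp (continuous_const.mul continuous_id)).aestronglyMeasurable)
      (c := 1) (Eventually.of_forall fun v => by simpa using Real.abs_cos_le_one (w * v))
    exact h.congr (Eventually.of_forall fun v => mul_comm _ _)
  have hsinI : ∀ w : ℝ, Integrable (fun v : ℝ => f v * Real.sin (w * v)) := by
    intro w
    have h := hf.bdd_mul (f := fun v : ℝ => Real.sin (w * v))
      ((Real.continuous_sin.comp (continuous_const.mul continuous_id)).aestronglyMeasurable)
      (c := 1) (Eventually.of_forall fun v => by simpa using Real.abs_sin_le_one (w * v))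
    exact h.congr (Eventually.of_forall fun v => mul_comm _ _)
  have key : ∀ w : ℝ, (∫ v : ℝ, Real.fourierChar (-(v * (w / (2 * π)))) • (f v : ℂ))
      = ((∫ v : ℝ, f v * Real.cos (w * v) : ℝ) : ℂ)
        - ((∫ v : ℝ, f v * Real.sin (w * v) : ℝ) : ℂ) * Complex.I := by
    intro w
    have e1 : ∀ v : ℝ, Real.fourierChar (-(v * (w / (2 * π)))) • (f v : ℂ)
        = ((f v * Real.cos (w * v) : ℝ) : ℂ) - ((f v * Real.sin (w * v) : ℝ) : ℂ) * Complex.I := by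
      intro v
      have h2 : 2 * π * -(v * (w / (2 * π))) = -(w * v) := by
        field_simp [Real.pi_ne_zero]
      rw [Circle.smul_def, Real.fourierChar_apply, h2]
      push_cast
      rw [Complex.exp_mul_I]
      simp only [Complex.cos_neg, Complex.sin_neg, smul_eq_mul]
      ring
    have h1 : Integrable (fun v : ℝ => ((f v * Real.cos (w * v) : ℝ) : ℂ)) := (hcosI w).ofReal
    have h2 : Integrable (fun v : ℝ => ((f v * Real.sin (w * v) : ℝ) : ℂ) * Complex.I) :=
      ((hsinI w).ofReal).mul_const Complex.I
    rw [integral_congr_ae (Eventually.of_forall e1), integral_sub h1 h2, integral_mul_const]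
    congr 1
    · exact integral_ofReal (𝕜 := ℂ)
    · congr 1
      exact integral_ofReal (𝕜 := ℂ)
  rw [funext key] at H2
  constructor
  · have h := (Complex.continuous_re.tendsto 0).comp H2
    have h3 : ∀ w : ℝ, ((((∫ v : ℝ, f v * Real.cos (w * v) : ℝ) : ℂ))
        - (((∫ v : ℝ, f v * Real.sin (w * v) : ℝ) : ℂ)) * Complex.I).re
        = ∫ v : ℝ, f v * Real.cos (w * v) := by intro w; simp
    simp only [Function.comp_def, h3, Complex.zero_re] at h
    exact h
  · have h := (Complex.continuous_im.tendsto 0).comp H2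
    have h3 : ∀ w : ℝ, ((((∫ v : ℝ, f v * Real.cos (w * v) : ℝ) : ℂ))
        - (((∫ v : ℝ, f v * Real.sin (w * v) : ℝ) : ℂ)) * Complex.I).im
        = -(∫ v : ℝ, f v * Real.sin (w * v)) := by intro w; simp
    simp only [Function.comp_def, h3, Complex.zero_im] at h
    simpa using h.neg


lemma weight_int (χ : ℝ → ℝ) (hχ : ContinuousOn χ (Icc 0 1)) :
    IntegrableOn (fun u : ℝ => χ u / Real.sqrt (1 - u ^ 2)) (Ioc (0:ℝ) 1) := by
  obtain ⟨C, hC⟩ := (isCompact_Icc (a := (0:ℝ)) (b := 1)).exists_bound_of_continuousOn hχ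
  have hC0 : 0 ≤ C := le_trans (norm_nonneg _) (hC 0 (by norm_num))
  have hmaj : IntegrableOn (fun u : ℝ => C * (1 - u) ^ (-(1/2) : ℝ)) (Ioc (0:ℝ) 1) := by
    have h1 : IntervalIntegrable (fun x : ℝ => x ^ (-(1/2) : ℝ)) volume 0 1 :=
      intervalIntegral.intervalIntegrable_rpow' (by norm_num)
    have h2 : IntervalIntegrable (fun x : ℝ => (1 - x) ^ (-(1/2) : ℝ)) volume 0 1 := by
      have := (h1.comp_sub_left 1).symm
      simpa using this
    have h3 := (h2.const_mul C)
    rw [intervalIntegrable_iff, uIoc_of_le (by norm_num : (0:ℝ) ≤ 1)] at h3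
    exact h3
  have hmeas : AEStronglyMeasurable (fun u : ℝ => χ u / Real.sqrt (1 - u ^ 2))
      (volume.restrict (Ioc (0:ℝ) 1)) := by
    rw [← MeasureTheory.Measure.restrict_congr_set MeasureTheory.Ioo_ae_eq_Ioc]
    refine ContinuousOn.aestronglyMeasurable ?_ measurableSet_Ioo
    refine ContinuousOn.div (hχ.mono (Ioo_subset_Icc_self)) ?_ ?_
    · exact (Real.continuous_sqrt.comp (by continuity)).continuousOn
    · intro u hu
      have : 0 < 1 - u ^ 2 := by nlinarith [hu.1, hu.2]
      positivity
  refine Integrable.mono' hmaj hmeas ?_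
  refine (ae_restrict_iff' measurableSet_Ioc).2 (Eventually.of_forall fun u hu => ?_)
  rcases eq_or_lt_of_le hu.2 with h1 | h1
  · have : (1:ℝ) - u ^ 2 = 0 := by rw [h1]; ring
    rw [this]
    simp [Real.sqrt_zero, div_zero, h1]
  · have h0 : 0 < u := hu.1
    have hlt : 0 < 1 - u := by linarith
    have hsq : Real.sqrt (1 - u) ≤ Real.sqrt (1 - u ^ 2) := by
      apply Real.sqrt_le_sqrt; nlinarith
    have hpos : 0 < Real.sqrt (1 - u) := Real.sqrt_pos.2 hlt
    have : ‖χ u / Real.sqrt (1 - u ^ 2)‖ ≤ C / Real.sqrt (1 - u) := by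
      rw [norm_div, Real.norm_eq_abs (Real.sqrt _), abs_of_nonneg (Real.sqrt_nonneg _)]
      apply div_le_div₀ hC0 (hC u ⟨le_of_lt h0, hu.2⟩) hpos hsq
    refine this.trans (le_of_eq ?_)
    rw [Real.rpow_neg (le_of_lt hlt), Real.sqrt_eq_rpow, div_eq_mul_inv]
lemma II_weight (χ : ℝ → ℝ) (hχ : ContinuousOn χ (Icc 0 1)) :
    IntervalIntegrable (fun u : ℝ => χ u / Real.sqrt (1 - u ^ 2)) volume 0 1 := by
  rw [intervalIntegrable_iff_integrableOn_Ioc_of_le (by norm_num)]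
  exact weight_int χ hχ

lemma RL_interval (χ : ℝ → ℝ) (hχ : ContinuousOn χ (Icc 0 1)) :
    Tendsto (fun w : ℝ => ∫ u in (0:ℝ)..1, χ u * Real.cos (w * u) / Real.sqrt (1 - u ^ 2))
      atTop (𝓝 0) ∧
    Tendsto (fun w : ℝ => ∫ u in (0:ℝ)..1, χ u * Real.sin (w * u) / Real.sqrt (1 - u ^ 2))
      atTop (𝓝 0) := by
  set f : ℝ → ℝ := (Ioc (0:ℝ) 1).indicator (fun u => χ u / Real.sqrt (1 - u ^ 2)) with hfdef
  have hf : Integrable f := (integrable_indicator_iff measurableSet_Ioc).2 (weight_int χ hχ)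
  obtain ⟨hc, hs⟩ := RL_aux f hf
  have ec : ∀ w : ℝ, (∫ v : ℝ, f v * Real.cos (w * v))
      = ∫ u in (0:ℝ)..1, χ u * Real.cos (w * u) / Real.sqrt (1 - u ^ 2) := by
    intro w
    rw [intervalIntegral.integral_of_le (by norm_num : (0:ℝ) ≤ 1),
      ← integral_indicator measurableSet_Ioc]
    congr 1
    funext v
    by_cases hv : v ∈ Ioc (0:ℝ) 1 <;>
      simp [hfdef, Set.indicator_apply, hv, div_mul_eq_mul_div]
  have es : ∀ w : ℝ, (∫ v : ℝ, f v * Real.sin (w * v))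
      = ∫ u in (0:ℝ)..1, χ u * Real.sin (w * u) / Real.sqrt (1 - u ^ 2) := by
    intro w
    rw [intervalIntegral.integral_of_le (by norm_num : (0:ℝ) ≤ 1),
      ← integral_indicator measurableSet_Ioc]
    congr 1
    funext v
    by_cases hv : v ∈ Ioc (0:ℝ) 1 <;>
      simp [hfdef, Set.indicator_apply, hv, div_mul_eq_mul_div]
  exact ⟨hc.congr ec, hs.congr es⟩

lemma subst_sin (g : ℝ → ℝ) (hg_cont : ContinuousOn g (Ioo 0 1))
    (hg1 : IntegrableOn g (Icc 0 1))
    (hg2 : IntegrableOn (fun x => Real.cos x * g (Real.sin x)) (uIcc 0 (π / 2))) :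
    ∫ x in (0:ℝ)..(π / 2), Real.cos x * g (Real.sin x) = ∫ u in (0:ℝ)..1, g u := by
  have hpi : (0:ℝ) < π / 2 := by positivity
  have hmin : min (0:ℝ) (π/2) = 0 := min_eq_left hpi.le
  have hmax : max (0:ℝ) (π/2) = π/2 := max_eq_right hpi.le
  have himg : Real.sin '' (Ioo 0 (π/2)) ⊆ Ioo 0 1 := by
    rintro _ ⟨x, hx, rfl⟩
    constructor
    · exact Real.sin_pos_of_pos_of_lt_pi hx.1 (hx.2.trans (by linarith [Real.pi_pos]))
    · have := Real.strictMonoOn_sin (a := x) (b := π/2)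
        ⟨by linarith [hx.1], hx.2.le⟩ ⟨by linarith [hpi], le_refl _⟩ hx.2
      simpa using this
  have himg2 : Real.sin '' (uIcc 0 (π/2)) ⊆ Icc 0 1 := by
    rintro _ ⟨x, hx, rfl⟩
    rw [uIcc_of_le hpi.le] at hx
    exact ⟨Real.sin_nonneg_of_nonneg_of_le_pi hx.1 (hx.2.trans (by linarith [Real.pi_pos])),
      Real.sin_le_one _⟩
  have h := intervalIntegral.integral_comp_smul_deriv''' (a := 0) (b := π/2)
    (f := Real.sin) (f' := Real.cos) (g := g)
    (Real.continuous_sin.continuousOn)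
    (by intro x hx; exact (Real.hasDerivAt_sin x).hasDerivWithinAt)
    (by rw [hmin, hmax]; exact hg_cont.mono himg)
    (hg1.mono_set himg2)
    (by simpa [smul_eq_mul] using hg2)
  simpa [smul_eq_mul, Real.sin_pi_div_two] using h

lemma refl_sin (F : ℝ → ℝ) (hF : ContinuousOn F (Icc 0 1)) :
    ∫ s in (0:ℝ)..π, F (Real.sin s) = 2 * ∫ s in (0:ℝ)..(π / 2), F (Real.sin s) := by
  have hpi := Real.pi_pos
  have hcont : ContinuousOn (fun s => F (Real.sin s)) (Icc 0 π) := by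
    refine hF.comp Real.continuous_sin.continuousOn ?_
    intro x hx
    exact ⟨Real.sin_nonneg_of_nonneg_of_le_pi hx.1 hx.2, Real.sin_le_one _⟩
  have hI1 : IntervalIntegrable (fun s => F (Real.sin s)) volume 0 (π/2) := by
    apply ContinuousOn.intervalIntegrable
    rw [uIcc_of_le (by positivity)]
    exact hcont.mono (Icc_subset_Icc le_rfl (by linarith))
  have hI2 : IntervalIntegrable (fun s => F (Real.sin s)) volume (π/2) π := by
    apply ContinuousOn.intervalIntegrable
    rw [uIcc_of_le (by linarith)]
    exact hcont.mono (Icc_subset_Icc (by positivity) le_rfl)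
  have hsplit := intervalIntegral.integral_add_adjacent_intervals hI1 hI2
  have hrefl : ∫ s in (π/2:ℝ)..π, F (Real.sin s) = ∫ s in (0:ℝ)..(π/2), F (Real.sin s) := by
    have h := intervalIntegral.integral_comp_sub_left (a := 0) (b := π/2)
      (fun s => F (Real.sin s)) π
    rw [show π - (0:ℝ) = π by ring, show π - π/2 = π/2 by ring] at h
    rw [← h]
    apply intervalIntegral.integral_congr
    intro x _
    simp [Real.sin_pi_sub]
  rw [← hsplit, hrefl]
  ring
lemma integral_cos_k (k T : ℝ) (hk : k ≠ 0) :
    ∫ t in (0:ℝ)..T, Real.cos (k * t) = Real.sin (k * T) / k := by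
  have h := intervalIntegral.integral_comp_mul_left (a := 0) (b := T) (fun x => Real.cos x) hk
  simp only [mul_zero] at h
  rw [h, integral_cos]
  simp [smul_eq_mul, div_eq_inv_mul]

lemma inner_int (a c T : ℝ) (h1 : -a < c) (h2 : c < a) :
    ∫ t in (0:ℝ)..T, Real.cos (a * t) * Real.cos (c * t)
      = Real.sin ((a - c) * T) / (2 * (a - c)) + Real.sin ((a + c) * T) / (2 * (a + c)) := by
  have hm : a - c ≠ 0 := by intro h; apply absurd h2; linarith [sub_eq_zero.mp h]
  have hp : a + c ≠ 0 := by intro h; apply absurd h1; simp; linarith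
  have e : ∀ t : ℝ, Real.cos (a * t) * Real.cos (c * t)
      = (Real.cos ((a - c) * t) + Real.cos ((a + c) * t)) / 2 := by
    intro t
    rw [sub_mul, add_mul, Real.cos_sub, Real.cos_add]
    ring
  rw [intervalIntegral.integral_congr (fun t _ => e t)]
  rw [intervalIntegral.integral_div]
  rw [intervalIntegral.integral_add
    ((by continuity : Continuous fun x : ℝ => Real.cos ((a - c) * x)).intervalIntegrable _ _)
    ((by continuity : Continuous fun x : ℝ => Real.cos ((a + c) * x)).intervalIntegrable _ _)]
  rw [integral_cos_k _ _ hm, integral_cos_k _ _ hp]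
  field_simp

end AuxLemmas

section AuxLemmas2
open MeasureTheory Set

lemma fubini_step (a b T : ℝ) (hT : 0 ≤ T) :
    ∫ t in (0:ℝ)..T, Real.cos (a * t) * J0 (b * t)
      = (1 / π) * ∫ s in (0:ℝ)..π, ∫ t in (0:ℝ)..T,
          Real.cos (a * t) * Real.cos (b * t * Real.sin s) := by
  have hpi := Real.pi_pos
  have step1 : ∀ t : ℝ, Real.cos (a * t) * J0 (b * t)
      = (1 / π) * ∫ s in (0:ℝ)..π, Real.cos (a * t) * Real.cos (b * t * Real.sin s) := by
    intro t
    rw [J0, intervalIntegral.integral_const_mul]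
    ring
  rw [intervalIntegral.integral_congr (fun t _ => step1 t),
    intervalIntegral.integral_const_mul]
  congr 1
  -- now swap the two interval integrals
  have hint : IntegrableOn (Function.uncurry fun t s : ℝ =>
      Real.cos (a * t) * Real.cos (b * t * Real.sin s)) ((Ioc 0 T) ×ˢ (Ioc 0 π)) (volume.prod volume) := by
    apply IntegrableOn.mono_set (t := (Icc 0 T) ×ˢ (Icc 0 π))
    · apply ContinuousOn.integrableOn_compact (isCompact_Icc.prod isCompact_Icc)
      apply Continuous.continuousOn
      exact ((Real.continuous_cos.comp (continuous_const.mul continuous_fst)).mul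
        (Real.continuous_cos.comp ((continuous_const.mul continuous_fst).mul
          (Real.continuous_sin.comp continuous_snd))))
    · exact Set.prod_mono Ioc_subset_Icc_self Ioc_subset_Icc_self
  have swap := MeasureTheory.integral_integral_swap
    (f := fun t s : ℝ => Real.cos (a * t) * Real.cos (b * t * Real.sin s))
    (μ := volume.restrict (Ioc 0 T)) (ν := volume.restrict (Ioc 0 π))
    (by rw [Measure.prod_restrict]; exact hint)
  rw [intervalIntegral.integral_of_le hT, intervalIntegral.integral_of_le hpi.le]
  simp only [intervalIntegral.integral_of_le hT, intervalIntegral.integral_of_le hpi.le]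
  exact swap

end AuxLemmas2

open MeasureTheory Set in
/-- For `0 < b < a`, the improper integral `∫₀^∞ cos(at) J₀(bt) dt`
converges and equals `0`. -/
theorem stmt_10 (a b : ℝ) (hb : 0 < b) (hab : b < a) :
    Tendsto (fun T : ℝ => ∫ t in (0:ℝ)..T, Real.cos (a * t) * J0 (b * t))
      atTop (𝓝 (0 : ℝ)) := by
  have hpi := Real.pi_pos
  have ha : 0 < a := hb.trans hab
  -- continuity of the two weights
  have hdm : ∀ u : ℝ, u ∈ Icc (0:ℝ) 1 → (0:ℝ) < 2 * (a - b * u) := by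
    intro u hu
    have : b * u ≤ b := by nlinarith [hu.1, hu.2]
    nlinarith
  have hdp : ∀ u : ℝ, u ∈ Icc (0:ℝ) 1 → (0:ℝ) < 2 * (a + b * u) := by
    intro u hu
    nlinarith [hu.1, hu.2]
  have hχm : ContinuousOn (fun u : ℝ => 1 / (2 * (a - b * u))) (Icc 0 1) := by
    refine ContinuousOn.div continuousOn_const (by fun_prop) ?_
    exact fun u hu => ne_of_gt (hdm u hu)
  have hχp : ContinuousOn (fun u : ℝ => 1 / (2 * (a + b * u))) (Icc 0 1) := by
    refine ContinuousOn.div continuousOn_const (by fun_prop) ?_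
    exact fun u hu => ne_of_gt (hdp u hu)
  obtain ⟨hPc1, hPs1⟩ := RL_interval (fun u : ℝ => 1 / (2 * (a - b * u))) hχm
  obtain ⟨hPc2, hPs2⟩ := RL_interval (fun u : ℝ => 1 / (2 * (a + b * u))) hχp
  have htw : Tendsto (fun T : ℝ => b * T) atTop atTop :=
    Tendsto.const_mul_atTop hb tendsto_id
  have hPc1' := hPc1.comp htw
  have hPs1' := hPs1.comp htw
  have hPc2' := hPc2.comp htw
  have hPs2' := hPs2.comp htw
  simp only [Function.comp_def] at hPc1' hPs1' hPc2' hPs2'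
  -- the four vanishing terms
  have t1 : Tendsto (fun T : ℝ => Real.sin (a * T) *
      ∫ u in (0:ℝ)..1, 1 / (2 * (a - b * u)) * Real.cos (b * T * u) / Real.sqrt (1 - u ^ 2))
      atTop (𝓝 0) := by
    have hn := hPc1'.norm
    rw [norm_zero] at hn
    refine squeeze_zero_norm (fun T => ?_) hn
    rw [norm_mul]
    refine mul_le_of_le_one_left (norm_nonneg _) ?_
    rw [Real.norm_eq_abs]
    exact Real.abs_sin_le_one (a * T)
  have t2 : Tendsto (fun T : ℝ => Real.cos (a * T) *
      ∫ u in (0:ℝ)..1, 1 / (2 * (a - b * u)) * Real.sin (b * T * u) / Real.sqrt (1 - u ^ 2))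
      atTop (𝓝 0) := by
    have hn := hPs1'.norm
    rw [norm_zero] at hn
    refine squeeze_zero_norm (fun T => ?_) hn
    rw [norm_mul]
    refine mul_le_of_le_one_left (norm_nonneg _) ?_
    rw [Real.norm_eq_abs]
    exact Real.abs_cos_le_one (a * T)
  have t3 : Tendsto (fun T : ℝ => Real.sin (a * T) *
      ∫ u in (0:ℝ)..1, 1 / (2 * (a + b * u)) * Real.cos (b * T * u) / Real.sqrt (1 - u ^ 2))
      atTop (𝓝 0) := by
    have hn := hPc2'.norm
    rw [norm_zero] at hn
    refine squeeze_zero_norm (fun T => ?_) hn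
    rw [norm_mul]
    refine mul_le_of_le_one_left (norm_nonneg _) ?_
    rw [Real.norm_eq_abs]
    exact Real.abs_sin_le_one (a * T)
  have t4 : Tendsto (fun T : ℝ => Real.cos (a * T) *
      ∫ u in (0:ℝ)..1, 1 / (2 * (a + b * u)) * Real.sin (b * T * u) / Real.sqrt (1 - u ^ 2))
      atTop (𝓝 0) := by
    have hn := hPs2'.norm
    rw [norm_zero] at hn
    refine squeeze_zero_norm (fun T => ?_) hn
    rw [norm_mul]
    refine mul_le_of_le_one_left (norm_nonneg _) ?_
    rw [Real.norm_eq_abs]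
    exact Real.abs_cos_le_one (a * T)
  have comb : Tendsto (fun T : ℝ => (2 / π) *
      ((Real.sin (a * T) * (∫ u in (0:ℝ)..1,
          1 / (2 * (a - b * u)) * Real.cos (b * T * u) / Real.sqrt (1 - u ^ 2))
        - Real.cos (a * T) * (∫ u in (0:ℝ)..1,
          1 / (2 * (a - b * u)) * Real.sin (b * T * u) / Real.sqrt (1 - u ^ 2)))
       + (Real.sin (a * T) * (∫ u in (0:ℝ)..1,
          1 / (2 * (a + b * u)) * Real.cos (b * T * u) / Real.sqrt (1 - u ^ 2))
        + Real.cos (a * T) * (∫ u in (0:ℝ)..1,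
          1 / (2 * (a + b * u)) * Real.sin (b * T * u) / Real.sqrt (1 - u ^ 2)))))
      atTop (𝓝 0) := by
    have h := ((t1.sub t2).add (t3.add t4)).const_mul (2 / π)
    simpa only [sub_zero, add_zero, mul_zero] using h
  refine Tendsto.congr' ?_ comb
  filter_upwards [eventually_ge_atTop (0:ℝ)] with T hT
  -- the main identity, for T ≥ 0
  set F : ℝ → ℝ := fun u =>
    Real.sin ((a - b * u) * T) / (2 * (a - b * u))
      + Real.sin ((a + b * u) * T) / (2 * (a + b * u)) with hFdef
  have hFcont : ContinuousOn F (Icc 0 1) := by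
    apply ContinuousOn.add
    · exact ContinuousOn.div (by fun_prop) (by fun_prop) (fun u hu => ne_of_gt (hdm u hu))
    · exact ContinuousOn.div (by fun_prop) (by fun_prop) (fun u hu => ne_of_gt (hdp u hu))
  -- step 1: Fubini + inner integral
  have step2 : ∀ s ∈ Set.uIcc (0:ℝ) π,
      (∫ t in (0:ℝ)..T, Real.cos (a * t) * Real.cos (b * t * Real.sin s)) = F (Real.sin s) := by
    intro s _
    have h1 : ∀ t : ℝ, Real.cos (a * t) * Real.cos (b * t * Real.sin s)
        = Real.cos (a * t) * Real.cos (b * Real.sin s * t) := by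
      intro t
      rw [show b * t * Real.sin s = b * Real.sin s * t by ring]
    rw [intervalIntegral.integral_congr (fun t _ => h1 t),
      inner_int a (b * Real.sin s) T
        (by nlinarith [Real.neg_one_le_sin s]) (by nlinarith [Real.sin_le_one s])]
  -- pointwise identity for the substitution
  have hpt : ∀ x : ℝ, -(π/2) < x → x < π/2 →
      Real.cos x * (F (Real.sin x) / Real.sqrt (1 - Real.sin x ^ 2)) = F (Real.sin x) := by
    intro x hx1 hx2
    have hc : 0 < Real.cos x := Real.cos_pos_of_mem_Ioo ⟨hx1, hx2⟩
    rw [show (1:ℝ) - Real.sin x ^ 2 = Real.cos x ^ 2 by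
        have := Real.sin_sq_add_cos_sq x; linarith,
      Real.sqrt_sq hc.le]
    field_simp
  have hae : ∀ᵐ x : ℝ, x ≠ π / 2 := by
    rw [MeasureTheory.ae_iff]
    simpa using measure_singleton (π / 2 : ℝ)
  -- main chain
  rw [fubini_step a b T hT, intervalIntegral.integral_congr step2, refl_sin F hFcont]
  have hcg : (∫ s in (0:ℝ)..(π/2), F (Real.sin s))
      = ∫ x in (0:ℝ)..(π/2), Real.cos x * (F (Real.sin x) / Real.sqrt (1 - Real.sin x ^ 2)) := by
    apply intervalIntegral.integral_congr_ae
    filter_upwards [hae] with x hx hxI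
    rw [Set.uIoc_of_le (by positivity : (0:ℝ) ≤ π/2)] at hxI
    exact (hpt x (by linarith [hxI.1]) (lt_of_le_of_ne hxI.2 hx)).symm
  rw [hcg]
  have hsub : (∫ x in (0:ℝ)..(π/2),
        Real.cos x * (F (Real.sin x) / Real.sqrt (1 - Real.sin x ^ 2)))
      = ∫ u in (0:ℝ)..1, F u / Real.sqrt (1 - u ^ 2) := by
    apply subst_sin (fun u => F u / Real.sqrt (1 - u ^ 2))
    · apply ContinuousOn.div (hFcont.mono Ioo_subset_Icc_self)
        ((Real.continuous_sqrt.comp (by fun_prop)).continuousOn)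
      intro u hu
      have h2 : (0:ℝ) < 1 - u ^ 2 := by nlinarith [hu.1, hu.2]
      exact ne_of_gt (Real.sqrt_pos.2 h2)
    · rw [integrableOn_Icc_iff_integrableOn_Ioc]
      exact weight_int F hFcont
    · have base : IntegrableOn (fun x => F (Real.sin x)) (Set.uIcc 0 (π/2)) := by
        apply ContinuousOn.integrableOn_compact isCompact_uIcc
        apply hFcont.comp Real.continuous_sin.continuousOn
        intro x hx
        rw [Set.uIcc_of_le (by positivity : (0:ℝ) ≤ π/2)] at hx
        exact ⟨Real.sin_nonneg_of_nonneg_of_le_pi hx.1 (by linarith [hx.2]),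
          Real.sin_le_one _⟩
      apply base.congr_fun_ae
      have hae' : ∀ᵐ x ∂(volume.restrict (Set.uIcc 0 (π/2))), x ≠ π/2 :=
        hae.filter_mono (ae_mono Measure.restrict_le_self)
      have hmem : ∀ᵐ x ∂(volume.restrict (Set.uIcc 0 (π/2))), x ∈ Set.uIcc (0:ℝ) (π/2) :=
        ae_restrict_mem measurableSet_uIcc
      filter_upwards [hae', hmem] with x hx hxmem
      rw [Set.uIcc_of_le (by positivity : (0:ℝ) ≤ π/2)] at hxmem
      exact (hpt x (by linarith [hxmem.1]) (lt_of_le_of_ne hxmem.2 hx)).symm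
  rw [hsub]
  -- expansion and splitting
  have expand : ∀ u : ℝ, F u / Real.sqrt (1 - u ^ 2)
      = (Real.sin (a * T) * (1 / (2 * (a - b * u)) * Real.cos (b * T * u) / Real.sqrt (1 - u ^ 2))
          - Real.cos (a * T) * (1 / (2 * (a - b * u)) * Real.sin (b * T * u) / Real.sqrt (1 - u ^ 2)))
        + (Real.sin (a * T) * (1 / (2 * (a + b * u)) * Real.cos (b * T * u) / Real.sqrt (1 - u ^ 2))
          + Real.cos (a * T) * (1 / (2 * (a + b * u)) * Real.sin (b * T * u) / Real.sqrt (1 - u ^ 2))) := by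
    intro u
    rw [hFdef]
    simp only
    rw [show (a - b * u) * T = a * T - b * T * u by ring,
      show (a + b * u) * T = a * T + b * T * u by ring, Real.sin_sub, Real.sin_add]
    ring
  rw [intervalIntegral.integral_congr (fun u _ => expand u)]
  have i1 : IntervalIntegrable (fun u : ℝ =>
      1 / (2 * (a - b * u)) * Real.cos (b * T * u) / Real.sqrt (1 - u ^ 2)) volume 0 1 :=
    II_weight (fun u => 1 / (2 * (a - b * u)) * Real.cos (b * T * u))
      (hχm.mul (by fun_prop))
  have i2 : IntervalIntegrable (fun u : ℝ =>
      1 / (2 * (a - b * u)) * Real.sin (b * T * u) / Real.sqrt (1 - u ^ 2)) volume 0 1 :=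
    II_weight (fun u => 1 / (2 * (a - b * u)) * Real.sin (b * T * u))
      (hχm.mul (by fun_prop))
  have i3 : IntervalIntegrable (fun u : ℝ =>
      1 / (2 * (a + b * u)) * Real.cos (b * T * u) / Real.sqrt (1 - u ^ 2)) volume 0 1 :=
    II_weight (fun u => 1 / (2 * (a + b * u)) * Real.cos (b * T * u))
      (hχp.mul (by fun_prop))
  have i4 : IntervalIntegrable (fun u : ℝ =>
      1 / (2 * (a + b * u)) * Real.sin (b * T * u) / Real.sqrt (1 - u ^ 2)) volume 0 1 :=
    II_weight (fun u => 1 / (2 * (a + b * u)) * Real.sin (b * T * u))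
      (hχp.mul (by fun_prop))
  rw [intervalIntegral.integral_add
      ((i1.const_mul _).sub (i2.const_mul _)) ((i3.const_mul _).add (i4.const_mul _)),
    intervalIntegral.integral_sub (i1.const_mul _) (i2.const_mul _),
    intervalIntegral.integral_add (i3.const_mul _) (i4.const_mul _),
    intervalIntegral.integral_const_mul, intervalIntegral.integral_const_mul,
    intervalIntegral.integral_const_mul, intervalIntegral.integral_const_mul]
  field_simp
end

section
/- Let k ∈ ℝ. The radial function u : ℝ² \ {0} → ℝ, u(x) = J₀(k‖x‖), is twice continuously differentiable on ℝ² \ {0} and satisfies the Helmholtz equation ∂²u/∂x₁²(x) + ∂²u/∂x₂²(x) + k² u(x) = 0 for every x ∈ ℝ² with x ≠ 0. -/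
open Real

open intervalIntegral MeasureTheory Metric

set_option maxHeartbeats 1000000

noncomputable def bI (n : ℕ) (x : ℝ) : ℝ :=
  ∫ t in (0:ℝ)..π, Real.sin t ^ n * Real.cos (x * Real.sin t + n * (π / 2))

lemma bI_cont (n : ℕ) (x : ℝ) :
    Continuous fun t => Real.sin t ^ n * Real.cos (x * Real.sin t + n * (π / 2)) := by
  fun_prop

lemma hasDerivAt_bI (n : ℕ) (x : ℝ) : HasDerivAt (bI n) (bI (n + 1) x) x := by
  set F : ℝ → ℝ → ℝ := fun x t => Real.sin t ^ n * Real.cos (x * Real.sin t + n * (π / 2)) with hF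
  set F' : ℝ → ℝ → ℝ :=
    fun x t => Real.sin t ^ (n + 1) * Real.cos (x * Real.sin t + ((n + 1 : ℕ) : ℝ) * (π / 2)) with hF'
  have hmeas : ∀ᶠ y in nhds x, AEStronglyMeasurable (F y) (volume.restrict (Set.uIoc (0:ℝ) π)) :=
    Filter.Eventually.of_forall fun y => (bI_cont n y).aestronglyMeasurable
  have hint : IntervalIntegrable (F x) volume 0 π := (bI_cont n x).intervalIntegrable 0 π
  have hmeas' : AEStronglyMeasurable (F' x) (volume.restrict (Set.uIoc (0:ℝ) π)) :=
    (bI_cont (n + 1) x).aestronglyMeasurable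
  have hbd : ∀ᵐ t ∂(volume : Measure ℝ), t ∈ Set.uIoc (0:ℝ) π →
      ∀ y ∈ ball x 1, ‖F' y t‖ ≤ (fun _ : ℝ => (1:ℝ)) t := by
    refine Filter.Eventually.of_forall fun t _ y _ => ?_
    have h1 : |Real.sin t ^ (n + 1)| ≤ 1 := by
      rw [abs_pow]; exact pow_le_one₀ (abs_nonneg _) (abs_sin_le_one t)
    calc ‖F' y t‖
        = |Real.sin t ^ (n + 1)| * |Real.cos (y * Real.sin t + ((n + 1 : ℕ) : ℝ) * (π / 2))| := abs_mul _ _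
      _ ≤ 1 * 1 := mul_le_mul h1 (abs_cos_le_one _) (abs_nonneg _) zero_le_one
      _ = 1 := one_mul 1
  have hbi : IntervalIntegrable (fun _ : ℝ => (1:ℝ)) volume 0 π := intervalIntegrable_const
  have hdiff : ∀ᵐ t ∂(volume : Measure ℝ), t ∈ Set.uIoc (0:ℝ) π →
      ∀ y ∈ ball x 1, HasDerivAt (fun y => F y t) (F' y t) y := by
    refine Filter.Eventually.of_forall fun t _ y _ => ?_
    have h : HasDerivAt (fun y => y * Real.sin t + n * (π / 2)) (Real.sin t) y := by
      simpa using (hasDerivAt_mul_const (Real.sin t)).add_const ((n : ℝ) * (π / 2))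
    have h2 : HasDerivAt (fun y => Real.cos (y * Real.sin t + n * (π / 2)))
        (-Real.sin (y * Real.sin t + n * (π / 2)) * Real.sin t) y :=
      (Real.hasDerivAt_cos _).comp y h
    have h3 := h2.const_mul (Real.sin t ^ n)
    have e : Real.cos (y * Real.sin t + ((n : ℕ) + 1 : ℕ) * (π / 2))
        = -Real.sin (y * Real.sin t + n * (π / 2)) := by
      push_cast
      rw [show y * Real.sin t + ((n : ℝ) + 1) * (π / 2)
          = (y * Real.sin t + n * (π / 2)) + π / 2 by ring, Real.cos_add_pi_div_two]
    have : F' y t = Real.sin t ^ n * (-Real.sin (y * Real.sin t + n * (π / 2)) * Real.sin t) := by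
      rw [hF']; dsimp only; rw [e]; ring
    rw [hF]
    dsimp only
    rw [this]
    exact h3
  have key := intervalIntegral.hasDerivAt_integral_of_dominated_loc_of_deriv_le
    (ball_mem_nhds x one_pos) hmeas hint hmeas' hbd hbi hdiff
  exact key.2

lemma bessel_eq (x : ℝ) : x * bI 2 x + bI 1 x + x * bI 0 x = 0 := by
  have hint : ∀ n : ℕ, IntervalIntegrable
      (fun t => Real.sin t ^ n * Real.cos (x * Real.sin t + n * (π / 2))) volume 0 π :=
    fun n => (bI_cont n x).intervalIntegrable 0 π
  have h2 : x * bI 2 x = ∫ t in (0:ℝ)..π,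
      x * (Real.sin t ^ 2 * Real.cos (x * Real.sin t + (2:ℕ) * (π / 2))) :=
    (intervalIntegral.integral_const_mul x _).symm
  have h0 : x * bI 0 x = ∫ t in (0:ℝ)..π,
      x * (Real.sin t ^ 0 * Real.cos (x * Real.sin t + (0:ℕ) * (π / 2))) :=
    (intervalIntegral.integral_const_mul x _).symm
  have i2 : IntervalIntegrable
      (fun t => x * (Real.sin t ^ 2 * Real.cos (x * Real.sin t + (2:ℕ) * (π / 2)))) volume 0 π :=
    (hint 2).const_mul x
  have i1 := hint 1
  have i0 : IntervalIntegrable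
      (fun t => x * (Real.sin t ^ 0 * Real.cos (x * Real.sin t + (0:ℕ) * (π / 2)))) volume 0 π :=
    (hint 0).const_mul x
  rw [show bI 1 x = ∫ t in (0:ℝ)..π,
      Real.sin t ^ 1 * Real.cos (x * Real.sin t + (1:ℕ) * (π / 2)) from rfl] at *
  rw [h2, h0, ← intervalIntegral.integral_add i2 i1, ← intervalIntegral.integral_add (i2.add i1) i0]
  have e2 : ∀ t ∈ Set.uIcc (0:ℝ) π, HasDerivAt (fun t => Real.cos t * Real.sin (x * Real.sin t))
      (x * (Real.sin t ^ 2 * Real.cos (x * Real.sin t + (2:ℕ) * (π / 2)))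
        + Real.sin t ^ 1 * Real.cos (x * Real.sin t + (1:ℕ) * (π / 2))
        + x * (Real.sin t ^ 0 * Real.cos (x * Real.sin t + (0:ℕ) * (π / 2)))) t := by
    intro t _
    have h1 : HasDerivAt (fun t => x * Real.sin t) (x * Real.cos t) t :=
      (Real.hasDerivAt_sin t).const_mul x
    have hs : HasDerivAt (fun t => Real.sin (x * Real.sin t))
        (Real.cos (x * Real.sin t) * (x * Real.cos t)) t :=
      (Real.hasDerivAt_sin _).comp t h1
    have h3 := (Real.hasDerivAt_cos t).mul hs
    refine h3.congr_deriv (Eq.symm ?_)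
    have c2 : Real.cos (x * Real.sin t + ((2:ℕ):ℝ) * (π / 2)) = -Real.cos (x * Real.sin t) := by
      push_cast
      rw [show x * Real.sin t + 2 * (π / 2) = x * Real.sin t + π by ring, Real.cos_add_pi]
    have c1 : Real.cos (x * Real.sin t + ((1:ℕ):ℝ) * (π / 2)) = -Real.sin (x * Real.sin t) := by
      push_cast
      rw [show x * Real.sin t + 1 * (π / 2) = x * Real.sin t + π / 2 by ring,
        Real.cos_add_pi_div_two]
    rw [c2, c1]
    push_cast
    rw [show x * Real.sin t + 0 * (π / 2) = x * Real.sin t by ring]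
    linear_combination (-(x * Real.cos (x * Real.sin t))) * Real.sin_sq_add_cos_sq t
  rw [intervalIntegral.integral_eq_sub_of_hasDerivAt e2 ((i2.add i1).add i0)]
  simp

lemma J0_eq (x : ℝ) : J0 x = (1 / π) * bI 0 x := by simp [J0, bI]

lemma hasDerivAt_J0 (x : ℝ) : HasDerivAt J0 ((1 / π) * bI 1 x) x := by
  have h : HasDerivAt (fun x => (1 / π) * bI 0 x) ((1 / π) * bI 1 x) x :=
    (hasDerivAt_bI 0 x).const_mul (1 / π)
  exact h.congr_of_eventuallyEq (Filter.Eventually.of_forall fun y => J0_eq y)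

lemma hasDerivAt_D1 (x : ℝ) :
    HasDerivAt (fun x => (1 / π) * bI 1 x) ((1 / π) * bI 2 x) x :=
  (hasDerivAt_bI 1 x).const_mul (1 / π)

lemma besselJ (x : ℝ) :
    x * ((1 / π) * bI 2 x) + (1 / π) * bI 1 x + x * J0 x = 0 := by
  rw [J0_eq]
  linear_combination (1 / π) * bessel_eq x

lemma contDiff_J0 : ContDiff ℝ 2 J0 := by
  have d0 : Differentiable ℝ J0 := fun x => (hasDerivAt_J0 x).differentiableAt
  have hd0 : deriv J0 = fun x => (1 / π) * bI 1 x := funext fun x => (hasDerivAt_J0 x).deriv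
  have hd1 : deriv (fun x => (1 / π) * bI 1 x) = fun x => (1 / π) * bI 2 x :=
    funext fun x => (hasDerivAt_D1 x).deriv
  rw [show (2 : WithTop ℕ∞) = 1 + 1 from rfl, contDiff_succ_iff_deriv]
  refine ⟨d0, by simp, ?_⟩
  rw [hd0, contDiff_one_iff_deriv]
  refine ⟨fun x => (hasDerivAt_D1 x).differentiableAt, ?_⟩
  rw [hd1]
  exact continuous_const.mul (continuous_iff_continuousAt.2 fun x =>
    (hasDerivAt_bI 2 x).differentiableAt.continuousAt)

lemma hasDerivAt_sqrt_aux (c r : ℝ) (h : r ^ 2 + c ^ 2 ≠ 0) :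
    HasDerivAt (fun r : ℝ => Real.sqrt (r ^ 2 + c ^ 2))
      (r / Real.sqrt (r ^ 2 + c ^ 2)) r := by
  have hinner : HasDerivAt (fun r : ℝ => r ^ 2 + c ^ 2) (2 * r) r := by
    simpa using (hasDerivAt_pow 2 r).add_const (c ^ 2)
  have := (Real.hasDerivAt_sqrt h).comp r hinner
  refine this.congr_deriv (Eq.symm ?_)
  have hpos : 0 < r ^ 2 + c ^ 2 := lt_of_le_of_ne (by positivity) (Ne.symm h)
  have hne : Real.sqrt (r ^ 2 + c ^ 2) ≠ 0 := (Real.sqrt_pos.2 hpos).ne'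
  field_simp

lemma hasDerivAt_radial (k c r : ℝ) (h : r ^ 2 + c ^ 2 ≠ 0) :
    HasDerivAt (fun r : ℝ => J0 (k * Real.sqrt (r ^ 2 + c ^ 2)))
      ((1 / π) * bI 1 (k * Real.sqrt (r ^ 2 + c ^ 2))
        * (k * (r / Real.sqrt (r ^ 2 + c ^ 2)))) r := by
  have hs := (hasDerivAt_sqrt_aux c r h).const_mul k
  exact (hasDerivAt_J0 _).comp r hs

lemma deriv2_radial (k c a : ℝ) (h : 0 < a ^ 2 + c ^ 2) :
    deriv (fun s : ℝ => deriv (fun r : ℝ => J0 (k * Real.sqrt (r ^ 2 + c ^ 2))) s) a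
      = (1 / π) * bI 2 (k * Real.sqrt (a ^ 2 + c ^ 2)) * (k * (a / Real.sqrt (a ^ 2 + c ^ 2))) ^ 2
        + (1 / π) * bI 1 (k * Real.sqrt (a ^ 2 + c ^ 2))
          * (k * ((Real.sqrt (a ^ 2 + c ^ 2) - a * (a / Real.sqrt (a ^ 2 + c ^ 2)))
              / Real.sqrt (a ^ 2 + c ^ 2) ^ 2)) := by
  set G : ℝ → ℝ := fun r => (1 / π) * bI 1 (k * Real.sqrt (r ^ 2 + c ^ 2))
      * (k * (r / Real.sqrt (r ^ 2 + c ^ 2))) with hG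
  have hopen : ∀ᶠ r in nhds a, 0 < r ^ 2 + c ^ 2 := by
    have hc : Continuous fun r : ℝ => r ^ 2 + c ^ 2 := by fun_prop
    exact (hc.tendsto a).eventually (eventually_gt_nhds h)
  have hev : (fun s : ℝ => deriv (fun r : ℝ => J0 (k * Real.sqrt (r ^ 2 + c ^ 2))) s)
      =ᶠ[nhds a] G := by
    filter_upwards [hopen] with r hr
    exact (hasDerivAt_radial k c r hr.ne').deriv
  rw [hev.deriv_eq]
  -- derivative of G at a
  have hsqrt_pos : 0 < Real.sqrt (a ^ 2 + c ^ 2) := Real.sqrt_pos.2 h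
  have hs := hasDerivAt_sqrt_aux c a h.ne'
  have hA : HasDerivAt (fun r : ℝ => (1 / π) * bI 1 (k * Real.sqrt (r ^ 2 + c ^ 2)))
      ((1 / π) * bI 2 (k * Real.sqrt (a ^ 2 + c ^ 2)) * (k * (a / Real.sqrt (a ^ 2 + c ^ 2)))) a :=
    (hasDerivAt_D1 _).comp a (hs.const_mul k)
  have hB : HasDerivAt (fun r : ℝ => k * (r / Real.sqrt (r ^ 2 + c ^ 2)))
      (k * ((Real.sqrt (a ^ 2 + c ^ 2) - a * (a / Real.sqrt (a ^ 2 + c ^ 2)))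
        / Real.sqrt (a ^ 2 + c ^ 2) ^ 2)) a := by
    have hdiv : HasDerivAt (fun r : ℝ => r / Real.sqrt (r ^ 2 + c ^ 2))
        ((1 * Real.sqrt (a ^ 2 + c ^ 2) - a * (a / Real.sqrt (a ^ 2 + c ^ 2)))
          / Real.sqrt (a ^ 2 + c ^ 2) ^ 2) a :=
      (hasDerivAt_id a).div hs hsqrt_pos.ne'
    have := hdiv.const_mul k
    refine this.congr_deriv (Eq.symm ?_)
    ring
  have := hA.mul hB
  rw [(show HasDerivAt G _ a from hA.mul hB).deriv]
  ring

lemma alg (d2 d1 j k a b ρ : ℝ) (hρpos : 0 < ρ) (hρ2 : ρ ^ 2 = a ^ 2 + b ^ 2)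
    (hb : (k * ρ) * d2 + d1 + (k * ρ) * j = 0) :
    d2 * (k * (a / ρ)) ^ 2 + d1 * (k * ((ρ - a * (a / ρ)) / ρ ^ 2))
      + (d2 * (k * (b / ρ)) ^ 2 + d1 * (k * ((ρ - b * (b / ρ)) / ρ ^ 2)))
      + k ^ 2 * j = 0 := by
  have hρ : ρ ≠ 0 := hρpos.ne'
  field_simp
  linear_combination (k * ρ ^ 2) * hb + (k * (d1 - k * ρ * d2)) * hρ2

/-- For `k ∈ ℝ`, the radial function `u(x) = J₀(k‖x‖)` is twice
continuously differentiable on `ℝ² \ {0}` and satisfies the Helmholtz equation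
`∂²u/∂x₁² + ∂²u/∂x₂² + k²u = 0` at every `x ≠ 0`. -/
theorem stmt_16 (k : ℝ) (u : ℝ × ℝ → ℝ)
    (hu : ∀ x : ℝ × ℝ, u x = J0 (k * Real.sqrt (x.1 ^ 2 + x.2 ^ 2))) :
    ContDiffOn ℝ 2 u {x : ℝ × ℝ | x ≠ 0} ∧
    ∀ x : ℝ × ℝ, x ≠ 0 →
      deriv (fun s : ℝ => deriv (fun r : ℝ => u (r, x.2)) s) x.1 +
        deriv (fun s : ℝ => deriv (fun r : ℝ => u (x.1, r)) s) x.2 +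
        k ^ 2 * u x = 0 := by
  have hu' : u = fun x : ℝ × ℝ => J0 (k * Real.sqrt (x.1 ^ 2 + x.2 ^ 2)) := funext hu
  have hposof : ∀ x : ℝ × ℝ, x ≠ 0 → 0 < x.1 ^ 2 + x.2 ^ 2 := by
    intro x hx
    by_contra hc
    push_neg at hc
    have h1 : x.1 = 0 := by nlinarith [sq_nonneg x.1, sq_nonneg x.2]
    have h2 : x.2 = 0 := by nlinarith [sq_nonneg x.1, sq_nonneg x.2]
    exact hx (Prod.ext h1 h2)
  constructor
  · intro x hx
    have hpos := hposof x hx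
    have hct : ContDiffAt ℝ 2 u x := by
      rw [hu']
      exact contDiff_J0.contDiffAt.comp x (contDiffAt_const.mul
        ((((contDiff_fst.pow 2).add (contDiff_snd.pow 2)).contDiffAt).sqrt hpos.ne'))
    exact hct.contDiffWithinAt
  · intro x hx
    have hpos := hposof x hx
    have hpos2 : 0 < x.2 ^ 2 + x.1 ^ 2 := by linarith [hpos, add_comm (x.1^2) (x.2^2)]
    have h1 : (fun r : ℝ => u (r, x.2)) = fun r : ℝ => J0 (k * Real.sqrt (r ^ 2 + x.2 ^ 2)) := by
      funext r; exact hu (r, x.2)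
    have h2 : (fun r : ℝ => u (x.1, r)) = fun r : ℝ => J0 (k * Real.sqrt (r ^ 2 + x.1 ^ 2)) := by
      funext r
      rw [hu (x.1, r)]
      norm_num [add_comm]
    rw [h1, h2, deriv2_radial k x.2 x.1 hpos, deriv2_radial k x.1 x.2 hpos2, hu x,
      show x.2 ^ 2 + x.1 ^ 2 = x.1 ^ 2 + x.2 ^ 2 from add_comm _ _]
    set ρ := Real.sqrt (x.1 ^ 2 + x.2 ^ 2) with hρ
    have hρpos : 0 < ρ := Real.sqrt_pos.2 hpos
    have hρ2 : ρ ^ 2 = x.1 ^ 2 + x.2 ^ 2 := Real.sq_sqrt hpos.le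
    set d2 := (1 / π) * bI 2 (k * ρ)
    set d1 := (1 / π) * bI 1 (k * ρ)
    set j := J0 (k * ρ)
    have hb : (k * ρ) * d2 + d1 + (k * ρ) * j = 0 := besselJ (k * ρ)
    exact alg d2 d1 j k x.1 x.2 ρ hρpos hρ2 hb
end
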